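/- Let S be a monoid, A an S-act without zero elements, and I a set with |I| > 1. Then A ⊔ z₁ ⊔ z₂ is geometrically equivalent to A ⊔ (⊔_{i∈I} z_i), where the z_i are one-point trivial S-acts. -/

import Mathlib

/-- The kernel of a map, as a set of pairs. -/
def actKer {A B : Type} (f : A → B) : Set (A × A) := {p | f p.1 = f p.2}

/-- A homomorphism of left `S`-acts is an `S`-equivariant map. -/
def IsActHom (S : Type) [Monoid S] {A B : Type} [MulAction S A] [MulAction S B]
    (f : A → B) : Prop := ∀ (s : S) (a : A), f (s • a) = s • f a

/-- The free left `S`-act on `n` generators: a coproduct of `n` copies of `S`. -/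
def FreeAct (S : Type) (n : ℕ) : Type := Fin n × S

instance (S : Type) [Monoid S] (n : ℕ) : SMul S (FreeAct S n) :=
  ⟨fun s p => (p.1, s * p.2)⟩

instance (S : Type) [Monoid S] (n : ℕ) : MulAction S (FreeAct S n) where
  one_smul p := show (p.1, 1 * p.2) = p by rw [one_mul]; rfl
  mul_smul s t p := show (p.1, (s * t) * p.2) = (p.1, s * (t * p.2)) by rw [mul_assoc]

/-- A congruence on an `S`-act: an equivalence relation compatible with the action. -/
def IsCongruence (S : Type) [Monoid S] {A : Type} [MulAction S A]
    (T : Set (A × A)) : Prop :=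
  Equivalence (fun a b => (a, b) ∈ T) ∧
    ∀ (s : S) (a b : A), (a, b) ∈ T → (s • a, s • b) ∈ T

/-- The `G`-closure `T''` of a binary relation `T` on a free `S`-act:
the intersection of the kernels of all homomorphisms into `G` whose kernel contains `T`. -/
def actClosure (S : Type) [Monoid S] (G : Type) [MulAction S G] {n : ℕ}
    (T : Set (FreeAct S n × FreeAct S n)) : Set (FreeAct S n × FreeAct S n) :=
  {p | ∀ f : FreeAct S n → G, IsActHom S f → T ⊆ actKer f → f p.1 = f p.2}

/-- `T` is a `G`-closed congruence: an intersection of kernels of a set of homomorphisms. -/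
def GClosed (S : Type) [Monoid S] (G : Type) [MulAction S G] {n : ℕ}
    (T : Set (FreeAct S n × FreeAct S n)) : Prop :=
  ∃ A : Set (FreeAct S n → G), (∀ f ∈ A, IsActHom S f) ∧
    T = {p | ∀ f ∈ A, f p.1 = f p.2}

/-- Geometric equivalence of `S`-acts. -/
def GeomEquiv (S : Type) [Monoid S] (G₁ G₂ : Type) [MulAction S G₁] [MulAction S G₂] : Prop :=
  ∀ (n : ℕ) (T : Set (FreeAct S n × FreeAct S n)),
    actClosure S G₁ T = actClosure S G₂ T

/-- Coproduct (disjoint union) action on `A ⊕ B`. -/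
instance (S : Type) [Monoid S] {A B : Type} [MulAction S A] [MulAction S B] :
    SMul S (A ⊕ B) :=
  ⟨fun s x => match x with
    | Sum.inl a => Sum.inl (s • a)
    | Sum.inr b => Sum.inr (s • b)⟩

instance (S : Type) [Monoid S] {A B : Type} [MulAction S A] [MulAction S B] :
    MulAction S (A ⊕ B) where
  one_smul x := by
    cases x with
    | inl a => show Sum.inl ((1 : S) • a) = _; rw [one_smul]
    | inr b => show Sum.inr ((1 : S) • b) = _; rw [one_smul]
  mul_smul s t x := by
    cases x with
    | inl a => show Sum.inl ((s * t) • a) = Sum.inl (s • t • a); rw [mul_smul]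
    | inr b => show Sum.inr ((s * t) • b) = Sum.inr (s • t • b); rw [mul_smul]

/-- `Copies I A` is the coproduct of `I` copies of the `S`-act `A`. -/
def Copies (I A : Type) : Type := I × A

instance (S : Type) [Monoid S] {I A : Type} [MulAction S A] : SMul S (Copies I A) :=
  ⟨fun s p => (p.1, s • p.2)⟩

instance (S : Type) [Monoid S] {I A : Type} [MulAction S A] : MulAction S (Copies I A) where
  one_smul p := show (p.1, (1 : S) • p.2) = p by rw [one_smul]; rfl
  mul_smul s t p := show (p.1, (s * t) • p.2) = (p.1, s • t • p.2) by rw [mul_smul]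



lemma geomEquiv_of_separating (S : Type) [Monoid S] (G₁ G₂ : Type)
    [MulAction S G₁] [MulAction S G₂]
    (h12 : ∀ x y : G₁, x ≠ y → ∃ g : G₁ → G₂, IsActHom S g ∧ g x ≠ g y)
    (h21 : ∀ x y : G₂, x ≠ y → ∃ g : G₂ → G₁, IsActHom S g ∧ g x ≠ g y) :
    GeomEquiv S G₁ G₂ := by
  intro n T
  ext p
  constructor
  · intro hp f hf hT
    by_contra hne
    obtain ⟨g, hg, hgne⟩ := h21 _ _ hne
    exact hgne (hp (g ∘ f) (fun s a => by simp only [Function.comp]; rw [hf s a, hg s (f a)])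
      (fun q hq => by simp only [actKer, Set.mem_setOf_eq, Function.comp] at *
                      rw [hT hq]))
  · intro hp f hf hT
    by_contra hne
    obtain ⟨g, hg, hgne⟩ := h12 _ _ hne
    exact hgne (hp (g ∘ f) (fun s a => by simp only [Function.comp]; rw [hf s a, hg s (f a)])
      (fun q hq => by simp only [actKer, Set.mem_setOf_eq, Function.comp] at *
                      rw [hT hq]))

/-- For an `S`-act `A` with no zero element and a set `I` with
`|I| > 1`, the act `A ⊔ z₁ ⊔ z₂` is geometrically equivalent to `A ⊔ (⊔_{i ∈ I} z_i)`. -/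
theorem act_plus_two_zeros_geom_equiv_many_zeros
    (S : Type) [Monoid S] (A : Type) [MulAction S A]
    (hA : ¬ ∃ a : A, ∀ s : S, s • a = a)
    (I : Type) (hI : ∃ i j : I, i ≠ j) :
    GeomEquiv S (A ⊕ (PUnit ⊕ PUnit)) (A ⊕ Copies I PUnit) := by
  classical
  have hz : ∀ (s : S) (z : PUnit ⊕ PUnit), s • z = z := by
    intro s z
    cases z with
    | inl u => show Sum.inl (s • u) = _; rw [Subsingleton.elim (s • u) u]
    | inr u => show Sum.inr (s • u) = _; rw [Subsingleton.elim (s • u) u]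
  obtain ⟨i, j, hij⟩ := hI
  apply geomEquiv_of_separating
  · -- separate points of A ⊕ (PUnit ⊕ PUnit) via an injective hom
    intro x y hxy
    refine ⟨fun z => match z with
      | Sum.inl a => Sum.inl a
      | Sum.inr (Sum.inl _) => Sum.inr ((i, PUnit.unit) : Copies I PUnit)
      | Sum.inr (Sum.inr _) => Sum.inr ((j, PUnit.unit) : Copies I PUnit),
      ?_, ?_⟩
    · intro s a
      cases a with
      | inl a => rfl
      | inr b => cases b with
        | inl u => rfl
        | inr u => rfl
    · intro h
      apply hxy
      cases x with
      | inl a => cases y with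
        | inl a' => simpa using h
        | inr b => cases b <;> simp at h
      | inr b => cases y with
        | inl a' => cases b <;> simp at h
        | inr b' =>
          cases b with
          | inl u => cases b' with
            | inl u' => rfl
            | inr u' => simp only [Sum.inr.injEq] at h; exact absurd (congrArg Prod.fst (Sum.inr.inj h)) hij
          | inr u => cases b' with
            | inl u' => simp only [Sum.inr.injEq] at h; exact absurd (congrArg Prod.fst (Sum.inr.inj h)).symm hij
            | inr u' => rfl
  · intro x y hxy
    by_cases hcol : ∃ (k l : I), x = Sum.inr (k, PUnit.unit) ∧ y = Sum.inr (l, PUnit.unit)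
    · obtain ⟨k, l, hx, hy⟩ := hcol
      have hkl : k ≠ l := by
        intro h; apply hxy; rw [hx, hy, h]
      refine ⟨fun z => match z with
        | Sum.inl a => Sum.inl a
        | Sum.inr (m, _) =>
            Sum.inr (if m = k then Sum.inl PUnit.unit else Sum.inr PUnit.unit),
        ?_, ?_⟩
      · intro s a
        cases a with
        | inl a => rfl
        | inr b =>
          obtain ⟨m, u⟩ := b
          show Sum.inr (if m = k then Sum.inl PUnit.unit else Sum.inr PUnit.unit) =
            Sum.inr (s • (if m = k then Sum.inl PUnit.unit else Sum.inr PUnit.unit))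
          rw [hz]
      · rw [hx, hy]
        simp [hkl.symm]
    · refine ⟨fun z => match z with
        | Sum.inl a => Sum.inl a
        | Sum.inr _ => Sum.inr (Sum.inl PUnit.unit), ?_, ?_⟩
      · intro s a
        cases a with
        | inl a => rfl
        | inr b => rfl
      · cases x with
        | inl a => cases y with
          | inl a' => intro h; exact hxy (by simpa using h)
          | inr b => simp
        | inr b => cases y with
          | inl a' => simp
          | inr b' =>
            exact absurd ⟨b.1, b'.1, rfl, rfl⟩ hcol
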